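/- If G and H are groups each having Grossman's Property A, then the direct product G × H has Grossman's Property A. -/
import Mathlib


/-- A group `G` has Grossman's Property A if every class-preserving automorphism
(i.e. one sending each element to a conjugate of itself) is inner. -/
def HasPropertyA (G : Type*) [Group G] : Prop :=
  ∀ φ : G ≃* G, (∀ g : G, IsConj g (φ g)) → ∃ h : G, ∀ g : G, φ g = h * g * h⁻¹

private lemma propertyA_aux {G H : Type*} [Group G] [Group H] (φ : (G × H) ≃* (G × H))
    (hφ : ∀ x : G × H, IsConj x (φ x)) :
    ∃ ψ : G ≃* G, (∀ g : G, IsConj g (ψ g)) ∧ ∀ g : G, φ (g, 1) = (ψ g, 1) := by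
  have snd1 : ∀ g : G, (φ (g, 1)).2 = 1 := by
    intro g
    obtain ⟨c, hc⟩ := isConj_iff.mp (hφ (g, 1))
    have h2 := congrArg Prod.snd hc
    simpa using h2.symm
  have snd2 : ∀ g : G, (φ.symm (g, 1)).2 = 1 := by
    intro g
    obtain ⟨c, hc⟩ := isConj_iff.mp (hφ (φ.symm (g, 1)))
    rw [MulEquiv.apply_symm_apply] at hc
    have h2 : c.2 * (φ.symm (g, 1)).2 * c.2⁻¹ = 1 := congrArg Prod.snd hc
    have : (φ.symm (g, 1)).2 = c.2⁻¹ * (c.2 * (φ.symm (g, 1)).2 * c.2⁻¹) * c.2 := by group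
    rw [h2] at this
    simpa using this
  refine ⟨{ toFun := fun g => (φ (g, 1)).1
            invFun := fun g => (φ.symm (g, 1)).1
            left_inv := ?_
            right_inv := ?_
            map_mul' := ?_ }, ?_, ?_⟩
  · intro g
    have h1 : ((φ (g, 1)).1, (1 : H)) = φ (g, 1) := Prod.ext rfl (snd1 g).symm
    show (φ.symm ((φ (g, 1)).1, 1)).1 = g
    rw [h1, MulEquiv.symm_apply_apply]
  · intro g
    have h1 : ((φ.symm (g, 1)).1, (1 : H)) = φ.symm (g, 1) := Prod.ext rfl (snd2 g).symm
    show (φ ((φ.symm (g, 1)).1, 1)).1 = g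
    rw [h1, MulEquiv.apply_symm_apply]
  · intro a b
    show (φ (a * b, 1)).1 = (φ (a, 1)).1 * (φ (b, 1)).1
    have h1 : ((a * b : G), (1 : H)) = (a, 1) * (b, 1) := by ext <;> simp
    rw [h1, map_mul]
    rfl
  · intro g
    obtain ⟨c, hc⟩ := isConj_iff.mp (hφ (g, 1))
    exact isConj_iff.mpr ⟨c.1, congrArg Prod.fst hc⟩
  · intro g
    exact Prod.ext rfl (snd1 g)

theorem propertyA_prod (G H : Type*) [Group G] [Group H]
    (hG : HasPropertyA G) (hH : HasPropertyA H) : HasPropertyA (G × H) := by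
  intro φ hφ
  obtain ⟨ψ₁, hψ₁c, hψ₁⟩ := propertyA_aux φ hφ
  let e : (G × H) ≃* (H × G) := MulEquiv.prodComm
  let φ' : (H × G) ≃* (H × G) := e.symm.trans (φ.trans e)
  have hφ'eq : ∀ x : H × G, φ' x = ((φ (x.2, x.1)).2, (φ (x.2, x.1)).1) := by
    intro x; rfl
  have hφ' : ∀ x : H × G, IsConj x (φ' x) := by
    rintro ⟨h, g⟩
    obtain ⟨c, hc⟩ := isConj_iff.mp (hφ (g, h))
    refine isConj_iff.mpr ⟨(c.2, c.1), ?_⟩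
    rw [hφ'eq]
    exact Prod.ext (congrArg Prod.snd hc) (congrArg Prod.fst hc)
  obtain ⟨ψ₂, hψ₂c, hψ₂⟩ := propertyA_aux φ' hφ'
  have hφ1h : ∀ h : H, φ (1, h) = (1, ψ₂ h) := by
    intro h
    have h2 := hψ₂ h
    rw [hφ'eq] at h2
    exact Prod.ext (congrArg Prod.snd h2) (congrArg Prod.fst h2)
  obtain ⟨a, ha⟩ := hG ψ₁ hψ₁c
  obtain ⟨b, hb⟩ := hH ψ₂ hψ₂c
  refine ⟨(a, b), ?_⟩
  rintro ⟨g, h⟩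
  have hsplit : ((g, h) : G × H) = (g, 1) * (1, h) := by ext <;> simp
  rw [hsplit, map_mul, hψ₁, hφ1h]
  ext <;> simp [ha g, hb h]
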